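/- Fix k ≥ 2 and arbitrary vectors g_1, …, g_k ∈ ℝ^N. Then the optimal value of the constrained program sup { Σ_{i=1}^k ⟨u_i, g_i⟩ : u = (u_1,…,u_k) dual feasible for the MOT program with Σ_{i=1}^k u_i = 0 } is at most the optimal value of the relaxed program sup { Σ_{i=2}^k ⟨u_i, g_i − g_1⟩ : for each i = 2,…,k and all j, l ∈ {1,…,N}, u_i(j) − u_i(l) ≤ ((k−1)/k²)·‖x_j − x_l‖² }. (This is the deterministic domination UB_0 ≥ X_0 underlying the upper bound on the null limiting distribution.) -/

import Mathlib

open scoped BigOperators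

/-- The variance cost of the tuple `(x_{t 1}, …, x_{t k})`. -/
noncomputable def motCost {d k N : ℕ} (x : Fin N → EuclideanSpace ℝ (Fin d))
    (t : Fin k → Fin N) : ℝ :=
  (k : ℝ)⁻¹ * ∑ i, ‖x (t i) - (k : ℝ)⁻¹ • ∑ m, x (t m)‖ ^ 2

/-- Dual feasibility for the MOT program: for every tuple `(j_1,…,j_k)`,
`∑ i u_i(j_i) ≤ c(j_1,…,j_k)`. -/
def DualFeasible {d k N : ℕ} (x : Fin N → EuclideanSpace ℝ (Fin d))
    (u : Fin k → Fin N → ℝ) : Prop :=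
  ∀ t : Fin k → Fin N, ∑ i, u i (t i) ≤ motCost x t

/-- deterministic domination `UB₀ ≥ X₀`.  For arbitrary vectors
`g_1,…,g_k ∈ ℝ^N`, the optimal value of the null-limit program
`sup { ∑ i ⟨u_i, g_i⟩ : u dual feasible, ∑ i u_i = 0 }` is at most the optimal
value of the relaxed program
`sup { ∑_{i≥2} ⟨u_i, g_i − g_1⟩ : u_i(j) − u_i(l) ≤ ((k−1)/k²)‖x_j − x_l‖² }`. -/
lemma motCost_nonneg {d k N : ℕ} (x : Fin N → EuclideanSpace ℝ (Fin d))
    (t : Fin k → Fin N) : 0 ≤ motCost x t := by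
  unfold motCost; positivity

lemma motCost_pair {d k N : ℕ} (hk : 2 ≤ k) (x : Fin N → EuclideanSpace ℝ (Fin d))
    (i : Fin k) (j l : Fin N) :
    motCost x (fun m => if m = i then j else l)
      = ((k : ℝ) - 1) / (k : ℝ) ^ 2 * ‖x j - x l‖ ^ 2 := by
  have hkpos : 0 < (k : ℝ) := by
    have : 0 < k := by omega
    exact_mod_cast this
  have hk0 : (k : ℝ) ≠ 0 := ne_of_gt hkpos
  set a := x j with ha
  set b := x l with hb
  have hsum : ∑ m : Fin k, x (if m = i then j else l) = (a - b) + (k : ℝ) • b := by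
    have h1 : ∀ m : Fin k, x (if m = i then j else l)
        = (if m = i then a - b else 0) + b := by
      intro m; by_cases h : m = i <;> simp [h, ← ha, ← hb]
    rw [Finset.sum_congr rfl fun m _ => h1 m, Finset.sum_add_distrib,
      Finset.sum_ite_eq' Finset.univ i (fun _ => a - b)]
    simp [Finset.card_univ, ← Nat.cast_smul_eq_nsmul ℝ]
  have hmean : (k : ℝ)⁻¹ • ∑ m : Fin k, x (if m = i then j else l)
      = (k : ℝ)⁻¹ • (a - b) + b := by
    rw [hsum, smul_add, smul_smul, inv_mul_cancel₀ hk0, one_smul]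
  have hterm : ∀ m : Fin k,
      ‖x (if m = i then j else l) - (k : ℝ)⁻¹ • ∑ m : Fin k, x (if m = i then j else l)‖ ^ 2
      = (if m = i then (1 - (k:ℝ)⁻¹)^2 else ((k:ℝ)⁻¹)^2) * ‖a - b‖^2 := by
    intro m
    rw [hmean]
    by_cases h : m = i
    · have : a - ((k : ℝ)⁻¹ • (a - b) + b) = (1 - (k:ℝ)⁻¹) • (a - b) := by
        rw [sub_smul, one_smul]; abel
      simp [h, ← ha, this, norm_smul, mul_pow, abs_of_nonneg, sq_abs]
    · have : b - ((k : ℝ)⁻¹ • (a - b) + b) = -((k:ℝ)⁻¹ • (a - b)) := by abel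
      simp [h, ← hb, this, norm_smul, mul_pow, sq_abs]
  unfold motCost
  rw [Finset.sum_congr rfl fun m _ => hterm m]
  have h2 : ∀ m : Fin k, (if m = i then (1 - (↑k:ℝ)⁻¹) ^ 2 else ((↑k:ℝ))⁻¹ ^ 2) * ‖a - b‖ ^ 2
      = (if m = i then ((1 - (↑k:ℝ)⁻¹) ^ 2 - ((↑k:ℝ))⁻¹ ^ 2) * ‖a - b‖ ^ 2 else 0)
        + ((↑k:ℝ))⁻¹ ^ 2 * ‖a - b‖ ^ 2 := by
    intro m; by_cases h : m = i <;> simp [h] <;> ring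
  rw [Finset.sum_congr rfl fun m _ => h2 m, Finset.sum_add_distrib,
    Finset.sum_ite_eq' Finset.univ i, Finset.sum_const, Finset.card_univ]
  simp only [Finset.mem_univ, if_true, Fintype.card_fin, nsmul_eq_mul]
  field_simp
  ring

lemma diff_bound {d k N : ℕ} (hk : 2 ≤ k) (x : Fin N → EuclideanSpace ℝ (Fin d))
    {u : Fin k → Fin N → ℝ} (hu : DualFeasible x u) (hz : ∀ j, ∑ i, u i j = 0)
    (i : Fin k) (j l : Fin N) :
    u i j - u i l ≤ ((k : ℝ) - 1) / (k : ℝ) ^ 2 * ‖x j - x l‖ ^ 2 := by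
  have h := hu (fun m => if m = i then j else l)
  rw [motCost_pair hk] at h
  have hsum : ∑ m : Fin k, u m (if m = i then j else l)
      = (u i j - u i l) + ∑ m, u m l := by
    have h1 : ∀ m : Fin k, u m (if m = i then j else l)
        = (if m = i then u i j - u i l else 0) + u m l := by
      intro m; by_cases hm : m = i <;> simp [hm]
    rw [Finset.sum_congr rfl fun m _ => h1 m, Finset.sum_add_distrib,
      Finset.sum_ite_eq' Finset.univ i]
    simp
  rw [hsum, hz l, add_zero] at h
  exact h

lemma value_eq {k N : ℕ} {u g : Fin k → Fin N → ℝ} (hz : ∀ j, ∑ i, u i j = 0)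
    (i0 : Fin k) :
    ∑ i, ∑ j, u i j * g i j
      = ∑ i ∈ Finset.univ.filter (fun i => i ≠ i0), ∑ j, u i j * (g i j - g i0 j) := by
  rw [Finset.sum_comm, Finset.sum_comm (s := Finset.univ.filter (fun i => i ≠ i0))]
  refine Finset.sum_congr rfl fun j _ => ?_
  have herase : Finset.univ.filter (fun i : Fin k => i ≠ i0) = Finset.univ.erase i0 :=
    Finset.filter_ne' Finset.univ i0
  rw [herase]
  have hz' : ∑ i ∈ Finset.univ.erase i0, u i j = - u i0 j := by
    have := Finset.add_sum_erase Finset.univ (fun i => u i j) (Finset.mem_univ i0)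
    have h0 := hz j
    linarith [this, h0]
  have hexp : ∑ i ∈ Finset.univ.erase i0, u i j * (g i j - g i0 j)
      = ∑ i ∈ Finset.univ.erase i0, u i j * g i j
        - (∑ i ∈ Finset.univ.erase i0, u i j) * g i0 j := by
    rw [Finset.sum_mul, ← Finset.sum_sub_distrib]
    exact Finset.sum_congr rfl fun i _ => by ring
  rw [hexp, hz', ← Finset.add_sum_erase Finset.univ (fun i => u i j * g i j)
    (Finset.mem_univ i0)]
  ring

lemma not_bddAbove_of_mul {S : ℝ} (hS : S ≠ 0) {T : Set ℝ}
    (h : ∀ c : ℝ, c * S ∈ T) : ¬ BddAbove T := by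
  rintro ⟨M, hM⟩
  have := hM (h ((M + 1) / S))
  rw [div_mul_cancel₀ _ hS] at this
  linarith

lemma main_aux {d k N : ℕ} (hk : 2 ≤ k) (x : Fin N → EuclideanSpace ℝ (Fin d))
    (g : Fin k → Fin N → ℝ) (i0 : Fin k) :
    sSup {v : ℝ | ∃ u : Fin k → Fin N → ℝ, DualFeasible x u ∧
        (∀ j, ∑ i, u i j = 0) ∧ v = ∑ i, ∑ j, u i j * g i j} ≤
    sSup {v : ℝ | ∃ u : Fin k → Fin N → ℝ,
        (∀ i : Fin k, i ≠ i0 → ∀ j l : Fin N,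
          u i j - u i l ≤ ((k : ℝ) - 1) / (k : ℝ) ^ 2 * ‖x j - x l‖ ^ 2) ∧
        v = ∑ i ∈ Finset.univ.filter (fun i : Fin k => i ≠ i0),
              ∑ j, u i j * (g i j - g i0 j)} := by
  have hk1 : (1 : ℝ) ≤ (k : ℝ) := by
    have : 1 ≤ k := by omega
    exact_mod_cast this
  have hC : 0 ≤ ((k : ℝ) - 1) / (k : ℝ) ^ 2 := div_nonneg (by linarith) (by positivity)
  by_cases hS : ∀ i : Fin k, i ≠ i0 → ∑ j, (g i j - g i0 j) = 0
  · -- bounded case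
    have hsub : {v : ℝ | ∃ u : Fin k → Fin N → ℝ, DualFeasible x u ∧
        (∀ j, ∑ i, u i j = 0) ∧ v = ∑ i, ∑ j, u i j * g i j} ⊆
        {v : ℝ | ∃ u : Fin k → Fin N → ℝ,
        (∀ i : Fin k, i ≠ i0 → ∀ j l : Fin N,
          u i j - u i l ≤ ((k : ℝ) - 1) / (k : ℝ) ^ 2 * ‖x j - x l‖ ^ 2) ∧
        v = ∑ i ∈ Finset.univ.filter (fun i : Fin k => i ≠ i0),
              ∑ j, u i j * (g i j - g i0 j)} := by
      rintro v ⟨u, hu, hz, rfl⟩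
      exact ⟨u, fun i _ j l => diff_bound hk x hu hz i j l, value_eq hz i0⟩
    have h0A : (0 : ℝ) ∈ {v : ℝ | ∃ u : Fin k → Fin N → ℝ, DualFeasible x u ∧
        (∀ j, ∑ i, u i j = 0) ∧ v = ∑ i, ∑ j, u i j * g i j} :=
      ⟨fun _ _ => 0, fun t => by simpa using motCost_nonneg x t, fun j => by simp, by simp⟩
    have hBdd : BddAbove {v : ℝ | ∃ u : Fin k → Fin N → ℝ,
        (∀ i : Fin k, i ≠ i0 → ∀ j l : Fin N,
          u i j - u i l ≤ ((k : ℝ) - 1) / (k : ℝ) ^ 2 * ‖x j - x l‖ ^ 2) ∧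
        v = ∑ i ∈ Finset.univ.filter (fun i : Fin k => i ≠ i0),
              ∑ j, u i j * (g i j - g i0 j)} := by
      rcases Nat.eq_zero_or_pos N with hN | hN
      · subst hN
        refine ⟨0, ?_⟩
        rintro v ⟨u, _, rfl⟩
        simp
      · set j0 : Fin N := ⟨0, hN⟩
        refine ⟨∑ i ∈ Finset.univ.filter (fun i : Fin k => i ≠ i0),
          ∑ j, (((k : ℝ) - 1) / (k : ℝ) ^ 2 * ‖x j - x j0‖ ^ 2) * |g i j - g i0 j|, ?_⟩
        rintro v ⟨u, hu, rfl⟩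
        apply Finset.sum_le_sum
        intro i hi
        have hi' : i ≠ i0 := (Finset.mem_filter.mp hi).2
        have hiz : ∑ j, (g i j - g i0 j) = 0 := hS i hi'
        have key : ∑ j, u i j * (g i j - g i0 j)
            = ∑ j, (u i j - u i j0) * (g i j - g i0 j) := by
          have hdiff : ∑ j, u i j * (g i j - g i0 j)
              - ∑ j, (u i j - u i j0) * (g i j - g i0 j)
              = u i j0 * ∑ j, (g i j - g i0 j) := by
            rw [← Finset.sum_sub_distrib, Finset.mul_sum]
            exact Finset.sum_congr rfl fun j _ => by ring
          have := hdiff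
          rw [hiz, mul_zero] at this
          linarith
        rw [key]
        apply Finset.sum_le_sum
        intro j _
        have h1 := hu i hi' j j0
        have h2 := hu i hi' j0 j
        rw [norm_sub_rev] at h2
        have habs : |u i j - u i j0| ≤ ((k : ℝ) - 1) / (k : ℝ) ^ 2 * ‖x j - x j0‖ ^ 2 :=
          abs_sub_le_iff.mpr ⟨h1, by simpa using h2⟩
        calc (u i j - u i j0) * (g i j - g i0 j)
            ≤ |(u i j - u i j0) * (g i j - g i0 j)| := le_abs_self _
          _ = |u i j - u i j0| * |g i j - g i0 j| := abs_mul _ _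
          _ ≤ (((k : ℝ) - 1) / (k : ℝ) ^ 2 * ‖x j - x j0‖ ^ 2) * |g i j - g i0 j| :=
              mul_le_mul_of_nonneg_right habs (abs_nonneg _)
    exact csSup_le_csSup hBdd ⟨0, h0A⟩ hsub
  · push_neg at hS
    obtain ⟨i, hi, hSne⟩ := hS
    have hAunb : ¬ BddAbove {v : ℝ | ∃ u : Fin k → Fin N → ℝ, DualFeasible x u ∧
        (∀ j, ∑ i, u i j = 0) ∧ v = ∑ i, ∑ j, u i j * g i j} := by
      apply not_bddAbove_of_mul hSne
      intro c
      refine ⟨fun i' _ => if i' = i then c else if i' = i0 then -c else 0, ?_, ?_, ?_⟩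
      · intro t
        have : ∑ i' : Fin k, (if i' = i then c else if i' = i0 then -c else 0) = 0 := by
          have hdec : ∀ i' : Fin k, (if i' = i then c else if i' = i0 then -c else 0)
              = (if i' = i then c else 0) + (if i' = i0 then -c else 0) := by
            intro i'
            by_cases h1 : i' = i
            · subst h1; simp [hi]
            · simp [h1]
          rw [Finset.sum_congr rfl fun i' _ => hdec i', Finset.sum_add_distrib,
            Finset.sum_ite_eq' Finset.univ i, Finset.sum_ite_eq' Finset.univ i0]
          simp
        calc ∑ i' : Fin k, (if i' = i then c else if i' = i0 then -c else 0) = 0 := this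
          _ ≤ _ := motCost_nonneg x t
      · intro j
        have hdec : ∀ i' : Fin k, (if i' = i then c else if i' = i0 then -c else 0)
            = (if i' = i then c else 0) + (if i' = i0 then -c else 0) := by
          intro i'
          by_cases h1 : i' = i
          · subst h1; simp [hi]
          · simp [h1]
        rw [Finset.sum_congr rfl fun i' _ => hdec i', Finset.sum_add_distrib,
          Finset.sum_ite_eq' Finset.univ i, Finset.sum_ite_eq' Finset.univ i0]
        simp
      · rw [Finset.sum_comm]
        have hinner : ∀ j : Fin N,
            ∑ i' : Fin k, (if i' = i then c else if i' = i0 then -c else 0) * g i' j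
            = c * (g i j - g i0 j) := by
          intro j
          have hdec : ∀ i' : Fin k,
              (if i' = i then c else if i' = i0 then -c else 0) * g i' j
              = (if i' = i then c * g i j else 0) + (if i' = i0 then -(c * g i0 j) else 0) := by
            intro i'
            by_cases h1 : i' = i
            · subst h1; simp [hi]
            · by_cases h2 : i' = i0
              · subst h2; simp [h1]
              · simp [h1, h2]
          rw [Finset.sum_congr rfl fun i' _ => hdec i', Finset.sum_add_distrib,
            Finset.sum_ite_eq' Finset.univ i, Finset.sum_ite_eq' Finset.univ i0]
          simp; ring
        rw [Finset.sum_congr rfl fun j _ => hinner j, ← Finset.mul_sum]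
    have hBunb : ¬ BddAbove {v : ℝ | ∃ u : Fin k → Fin N → ℝ,
        (∀ i : Fin k, i ≠ i0 → ∀ j l : Fin N,
          u i j - u i l ≤ ((k : ℝ) - 1) / (k : ℝ) ^ 2 * ‖x j - x l‖ ^ 2) ∧
        v = ∑ i ∈ Finset.univ.filter (fun i : Fin k => i ≠ i0),
              ∑ j, u i j * (g i j - g i0 j)} := by
      apply not_bddAbove_of_mul hSne
      intro c
      refine ⟨fun i' _ => if i' = i then c else 0, ?_, ?_⟩
      · intro i' _ j l
        have : (if i' = i then c else 0) - (if i' = i then c else 0) = 0 := sub_self _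
        rw [this]
        exact mul_nonneg hC (by positivity)
      · rw [Finset.sum_eq_single_of_mem i (by simp [hi])]
        · rw [← Finset.mul_sum]
          simp
        · intro i' _ hi'
          refine Finset.sum_eq_zero fun j _ => ?_
          simp [hi']
    rw [Real.sSup_of_not_bddAbove hAunb, Real.sSup_of_not_bddAbove hBunb]

theorem null_limit_le_upper_bound {d k N : ℕ} (hk : 2 ≤ k)
    (x : Fin N → EuclideanSpace ℝ (Fin d)) (hx : Function.Injective x)
    (g : Fin k → Fin N → ℝ) :
    sSup {v : ℝ | ∃ u : Fin k → Fin N → ℝ, DualFeasible x u ∧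
        (∀ j, ∑ i, u i j = 0) ∧ v = ∑ i, ∑ j, u i j * g i j} ≤
    sSup {v : ℝ | ∃ u : Fin k → Fin N → ℝ,
        (∀ i : Fin k, i ≠ ⟨0, by omega⟩ → ∀ j l : Fin N,
          u i j - u i l ≤ ((k : ℝ) - 1) / (k : ℝ) ^ 2 * ‖x j - x l‖ ^ 2) ∧
        v = ∑ i ∈ Finset.univ.filter (fun i : Fin k => i ≠ ⟨0, by omega⟩),
              ∑ j, u i j * (g i j - g ⟨0, by omega⟩ j)} := by
  exact main_aux hk x g ⟨0, by omega⟩
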